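/- For a Gamma(m_P, λ_P) random variable X with m_P a positive integer, and positive constants c, γ̄ and nonnegative integer n, the integral ∫_0^∞ f_X(x) Φ(x)^{-n} e^{-c/Φ(x)} dx, where Φ(x) = γ̄_S for x ≤ γ̄/γ̄_S and Φ(x) = γ̄/x otherwise, equals (1/Γ(m_P))·[γ̄_S^{-n} e^{-c/γ̄_S} γ(m_P, λ_P γ̄/γ̄_S) + γ̄^{-n} λ_P^{m_P} Γ(m_P + n, λ_P γ̄/γ̄_S + c/γ̄_S)/(λ_P + c/γ̄)^{m_P+n}]. -/

import Mathlib

open MeasureTheory Real Set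

/-- For `X ~ Gamma(m_P, λ_P)` and `Φ(x) = γ̄_S` for `x ≤ γ̄/γ̄_S`,
`Φ(x) = γ̄/x` otherwise, the integral `∫_0^∞ f_X(x) Φ(x)^{-n} e^{-c/Φ(x)} dx` equals
`(1/Γ(m_P))·[γ̄_S^{-n} e^{-c/γ̄_S} γ(m_P, λ_P γ̄/γ̄_S)
  + γ̄^{-n} λ_P^{m_P} Γ(m_P + n, λ_P γ̄/γ̄_S + c/γ̄_S)/(λ_P + c/γ̄)^{m_P+n}]`. -/
theorem gamma_weighted_phi_integral (mP : ℕ) (hmP : 0 < mP) (lamP gS gbar c : ℝ)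
    (hlamP : 0 < lamP) (hgS : 0 < gS) (hgbar : 0 < gbar) (hc : 0 < c)
    (n : ℕ) (Φ : ℝ → ℝ) (hΦ : ∀ x, Φ x = if x ≤ gbar / gS then gS else gbar / x) :
    (∫ x in Ioi (0:ℝ),
        (lamP ^ mP / (Nat.factorial (mP - 1))) * x ^ (mP - 1) * Real.exp (-(lamP * x)) *
          Real.exp (-(c / Φ x)) / (Φ x) ^ n) =
      (1 / (Nat.factorial (mP - 1) : ℝ)) *
        (Real.exp (-(c / gS)) / gS ^ n *
            (∫ t in (0:ℝ)..(lamP * gbar / gS), t ^ (mP - 1) * Real.exp (-t)) +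
          lamP ^ mP / gbar ^ n *
            (∫ t in Ioi (lamP * gbar / gS + c / gS), t ^ (mP + n - 1) * Real.exp (-t)) /
            (lamP + c / gbar) ^ (mP + n)) := by
  have hF : (Nat.factorial (mP - 1) : ℝ) ≠ 0 := Nat.cast_ne_zero.mpr (Nat.factorial_ne_zero _)
  set b : ℝ := gbar / gS with hbdef
  have hb : 0 < b := div_pos hgbar hgS
  set a : ℝ := lamP + c / gbar with hadef
  have ha : 0 < a := by positivity
  set K : ℝ := lamP ^ mP / (Nat.factorial (mP - 1)) with hK
  set k : ℕ := mP + n - 1 with hk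
  set I1 : ℝ := ∫ x in (0:ℝ)..b, x ^ (mP - 1) * Real.exp (-(lamP * x)) with hI1
  set I2 : ℝ := ∫ x in Ioi b, x ^ k * Real.exp (-(a * x)) with hI2
  -- pointwise forms of the integrand on the two regions
  have hg1 : ∀ x ∈ Ioc (0:ℝ) b,
      K * x ^ (mP - 1) * Real.exp (-(lamP * x)) * Real.exp (-(c / Φ x)) / (Φ x) ^ n
        = (K * Real.exp (-(c / gS)) / gS ^ n) * (x ^ (mP - 1) * Real.exp (-(lamP * x))) := by
    intro x hx
    rw [hΦ, if_pos hx.2]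
    ring
  have hg2 : ∀ x ∈ Ioi b,
      K * x ^ (mP - 1) * Real.exp (-(lamP * x)) * Real.exp (-(c / Φ x)) / (Φ x) ^ n
        = (K / gbar ^ n) * (x ^ k * Real.exp (-(a * x))) := by
    intro x hx
    simp only [mem_Ioi] at hx
    have hx0 : 0 < x := hb.trans hx
    rw [hΦ, if_neg (not_le.mpr hx)]
    have h1 : c / (gbar / x) = c / gbar * x := by field_simp
    have h2 : Real.exp (-(lamP * x)) * Real.exp (-(c / gbar * x)) = Real.exp (-(a * x)) := by
      rw [← Real.exp_add]; congr 1; rw [hadef]; field_simp; ring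
    have hxpow : x ^ (mP - 1) * x ^ n = x ^ k := by
      rw [← pow_add]; congr 1; omega
    calc K * x ^ (mP - 1) * Real.exp (-(lamP * x)) * Real.exp (-(c / (gbar / x))) / (gbar / x) ^ n
        = K / gbar ^ n * ((x ^ (mP - 1) * x ^ n) *
            (Real.exp (-(lamP * x)) * Real.exp (-(c / gbar * x)))) := by
          rw [h1, div_pow]
          field_simp
      _ = K / gbar ^ n * (x ^ k * Real.exp (-(a * x))) := by rw [hxpow, h2]
  -- integrability
  have hcont1 : Continuous fun x : ℝ =>
      (K * Real.exp (-(c / gS)) / gS ^ n) * (x ^ (mP - 1) * Real.exp (-(lamP * x))) := by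
    fun_prop
  have hint1 : IntegrableOn (fun x : ℝ =>
      K * x ^ (mP - 1) * Real.exp (-(lamP * x)) * Real.exp (-(c / Φ x)) / (Φ x) ^ n)
      (Ioc 0 b) :=
    (hcont1.integrableOn_Ioc).congr_fun (fun x hx => (hg1 x hx).symm) measurableSet_Ioc
  have hint2base : IntegrableOn (fun x : ℝ => x ^ k * Real.exp (-(a * x))) (Ioi b) := by
    have h := integrableOn_rpow_mul_exp_neg_mul_rpow (p := 1) (s := (k : ℝ)) (b := a)
      (neg_one_lt_zero.trans_le (Nat.cast_nonneg k)) zero_lt_one ha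
    have h' : IntegrableOn (fun x : ℝ => x ^ k * Real.exp (-(a * x))) (Ioi 0) := by
      refine h.congr_fun (fun x hx => ?_) measurableSet_Ioi
      beta_reduce
      rw [Real.rpow_one, Real.rpow_natCast, neg_mul]
    exact h'.mono_set (Ioi_subset_Ioi hb.le)
  have hint2 : IntegrableOn (fun x : ℝ =>
      K * x ^ (mP - 1) * Real.exp (-(lamP * x)) * Real.exp (-(c / Φ x)) / (Φ x) ^ n)
      (Ioi b) :=
    by
    have h' : IntegrableOn (fun x : ℝ => (K / gbar ^ n) * (x ^ k * Real.exp (-(a * x)))) (Ioi b) :=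
      hint2base.const_mul _
    exact h'.congr_fun (fun x hx => (hg2 x hx).symm) measurableSet_Ioi
  -- split the integral
  have hsplit : (∫ x in Ioi (0:ℝ),
      K * x ^ (mP - 1) * Real.exp (-(lamP * x)) * Real.exp (-(c / Φ x)) / (Φ x) ^ n)
      = (∫ x in Ioc (0:ℝ) b,
          K * x ^ (mP - 1) * Real.exp (-(lamP * x)) * Real.exp (-(c / Φ x)) / (Φ x) ^ n)
        + ∫ x in Ioi b,
          K * x ^ (mP - 1) * Real.exp (-(lamP * x)) * Real.exp (-(c / Φ x)) / (Φ x) ^ n := by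
    rw [← Ioc_union_Ioi_eq_Ioi hb.le]
    exact setIntegral_union (Ioc_disjoint_Ioi le_rfl) measurableSet_Ioi hint1 hint2
  have e1 : (∫ x in Ioc (0:ℝ) b,
      K * x ^ (mP - 1) * Real.exp (-(lamP * x)) * Real.exp (-(c / Φ x)) / (Φ x) ^ n)
      = (K * Real.exp (-(c / gS)) / gS ^ n) * I1 := by
    rw [setIntegral_congr_fun measurableSet_Ioc hg1, integral_const_mul, hI1,
      intervalIntegral.integral_of_le hb.le]
  have e2 : (∫ x in Ioi b,
      K * x ^ (mP - 1) * Real.exp (-(lamP * x)) * Real.exp (-(c / Φ x)) / (Φ x) ^ n)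
      = (K / gbar ^ n) * I2 := by
    rw [setIntegral_congr_fun measurableSet_Ioi hg2, integral_const_mul, hI2]
  -- substitution identities
  have hJ1 : (∫ t in (0:ℝ)..(lamP * gbar / gS), t ^ (mP - 1) * Real.exp (-t))
      = lamP ^ mP * I1 := by
    have hlb : lamP * gbar / gS = lamP * b := by rw [hbdef]; ring
    rw [hlb, show (0:ℝ) = lamP * 0 by ring,
      ← intervalIntegral.smul_integral_comp_mul_left (fun t => t ^ (mP - 1) * Real.exp (-t)) lamP]
    have heq : ∀ x : ℝ, (lamP * x) ^ (mP - 1) * Real.exp (-(lamP * x))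
        = lamP ^ (mP - 1) * (x ^ (mP - 1) * Real.exp (-(lamP * x))) := by
      intro x; rw [mul_pow]; ring
    simp only [heq]
    rw [intervalIntegral.integral_const_mul, smul_eq_mul, ← mul_assoc,
      show lamP * lamP ^ (mP - 1) = lamP ^ mP from by rw [← pow_succ', Nat.sub_add_cancel hmP], hI1]
  have hJ2 : (∫ t in Ioi (lamP * gbar / gS + c / gS), t ^ k * Real.exp (-t))
      = a ^ (mP + n) * I2 := by
    have hab : lamP * gbar / gS + c / gS = a * b := by
      rw [hadef, hbdef]; field_simp
    have h := integral_comp_mul_left_Ioi (fun t : ℝ => t ^ k * Real.exp (-t)) b ha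
    rw [hab, show (∫ t in Ioi (a * b), t ^ k * Real.exp (-t))
        = a • ∫ x in Ioi b, (a * x) ^ k * Real.exp (-(a * x)) from by
          rw [h, smul_smul, mul_inv_cancel₀ ha.ne', one_smul]]
    have heq : ∀ x : ℝ, (a * x) ^ k * Real.exp (-(a * x))
        = a ^ k * (x ^ k * Real.exp (-(a * x))) := by
      intro x; rw [mul_pow]; ring
    simp only [heq]
    rw [integral_const_mul, smul_eq_mul, ← mul_assoc,
      show a * a ^ k = a ^ (mP + n) from by rw [← pow_succ', show k + 1 = mP + n by omega], hI2]
  rw [hsplit, e1, e2, hJ1, hJ2, hK]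
  have hane : a ^ (mP + n) ≠ 0 := pow_ne_zero _ ha.ne'
  field_simp
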